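/- In the abstract optimal-control framework with inf–sup constant C_is, assume the continuous optimality system holds for (ȳ, p̄, w̄, q̄, ū), the auxiliary solutions exist, and η_y ≥ ‖ŷ − ȳ_T‖_V, η_p ≥ ‖p̂ − p̄_T‖_Q, η_w ≥ ‖ŵ − w̄_T‖_V, η_u = ‖ũ − ū_T‖. Then, with μ := 4/θ² and ω := C_is²(1 + C_ct)², ‖p̄ − p̄_T‖_Q² ≤ 4 μ ω C_Ω⁸ η_y² + 2 μ ω C_Ω⁴ η_w² + 2 ω C_Ω² (2 + 2 μ C_Ω⁸) η_u² + 2 η_p². -/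

import Mathlib

open scoped RealInnerProductSpace


set_option maxHeartbeats 2000000

private lemma aux_sq_le {x c : ℝ} (hx : 0 ≤ x) (hc : 0 ≤ c) (h : x ^ 2 ≤ c * x) :
    x ≤ c := by nlinarith

/-- Step 4 of the global reliability analysis: the pressure error bound
`‖p̄ − p̄_T‖_Q² ≤ 4μωC_Ω⁸ η_y² + 2μωC_Ω⁴ η_w² + 2ωC_Ω²(2 + 2μC_Ω⁸) η_u² + 2η_p²`
with `μ = 4/θ²` and `ω = C_is²(1 + C_ct)²`. The inf–sup condition
`‖φ‖_Q ≤ C_is · sup_{ξ ≠ 0} B(ξ,φ)/‖ξ‖_V` is encoded through upper bounds of the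
set `{B(ξ,φ)/‖ξ‖_V : ξ ≠ 0}`. -/
theorem stmt_13
    {V Q H : Type*}
    [NormedAddCommGroup V] [InnerProductSpace ℝ V] [CompleteSpace V]
    [NormedAddCommGroup Q] [InnerProductSpace ℝ Q] [CompleteSpace Q]
    [NormedAddCommGroup H] [InnerProductSpace ℝ H] [CompleteSpace H]
    (ι : V →ₗ[ℝ] H) (CΩ : ℝ) (hCΩ : 0 < CΩ)
    (hι : ∀ ξ : V, ‖ι ξ‖ ≤ CΩ * ‖ξ‖)
    (A Cb : V →ₗ[ℝ] V →ₗ[ℝ] ℝ) (B : V →ₗ[ℝ] Q →ₗ[ℝ] ℝ)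
    (hAC : ∀ ξ ζ : V, A ξ ζ = Cb ζ ξ)
    (hAco : ∀ ξ : V, A ξ ξ = ‖ξ‖ ^ 2)
    (Cct : ℝ) (hCct : 0 < Cct)
    (hAct : ∀ ξ ζ : V, |A ξ ζ| ≤ Cct * ‖ξ‖ * ‖ζ‖)
    (Uad : Set H) (hUne : Uad.Nonempty) (hUconv : Convex ℝ Uad)
    (θ : ℝ) (hθ : 0 < θ) (f yΩ : H)
    -- the continuous optimality system
    (ybar : V) (pbar : Q) (wbar : V) (qbar : Q) (ubar : H) (hubar : ubar ∈ Uad)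
    (hst : ∀ ξ : V, A ybar ξ - B ξ pbar = ⟪f + ubar, ι ξ⟫)
    (hydiv : ∀ φ : Q, B ybar φ = 0)
    (had : ∀ ζ : V, Cb wbar ζ + B ζ qbar = ⟪ι ybar - yΩ, ι ζ⟫)
    (hwdiv : ∀ φ : Q, B wbar φ = 0)
    (hvi : ∀ u ∈ Uad, 0 ≤ ⟪ι wbar + θ • ubar, u - ubar⟫)
    -- the (arbitrary) discrete approximation
    (yT : V) (pT : Q) (wT : V) (qT : Q) (uT : H) (huT : uT ∈ Uad)
    -- auxiliary solution (ŷ, p̂)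
    (yhat : V) (phat : Q)
    (hsthat : ∀ ξ : V, A yhat ξ - B ξ phat = ⟪f + uT, ι ξ⟫)
    (hyhatdiv : ∀ φ : Q, B yhat φ = 0)
    -- auxiliary solution (ŵ, q̂)
    (what : V) (qhat : Q)
    (hadhat : ∀ ζ : V, Cb what ζ + B ζ qhat = ⟪ι yT - yΩ, ι ζ⟫)
    (hwhatdiv : ∀ φ : Q, B what φ = 0)
    -- auxiliary control ũ
    (utilde : H) (hutilde : utilde ∈ Uad)
    (hvitilde : ∀ u ∈ Uad, 0 ≤ ⟪ι wT + θ • utilde, u - utilde⟫)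
    -- auxiliary solution (ỹ, p̃)
    (ytilde : V) (ptilde : Q)
    (hsttilde : ∀ ξ : V, A ytilde ξ - B ξ ptilde = ⟪f + utilde, ι ξ⟫)
    (hytildediv : ∀ φ : Q, B ytilde φ = 0)
    -- auxiliary solution (w̃, q̃)
    (wtilde : V) (qtilde : Q)
    (hadtilde : ∀ ζ : V, Cb wtilde ζ + B ζ qtilde = ⟪ι ytilde - yΩ, ι ζ⟫)
    (hwtildediv : ∀ φ : Q, B wtilde φ = 0)
    -- the inf–sup condition
    (Cis : ℝ) (hCis : 0 < Cis)
    (hinfsup : ∀ φ : Q, ∀ c : ℝ, (∀ ξ : V, B ξ φ ≤ c * ‖ξ‖) → ‖φ‖ ≤ Cis * c)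
    -- error estimators
    (ηy ηp ηw ηu : ℝ)
    (hηy : ‖yhat - yT‖ ≤ ηy) (hηp : ‖phat - pT‖ ≤ ηp)
    (hηw : ‖what - wT‖ ≤ ηw)
    (hηu : ηu = ‖utilde - uT‖)
    (μ ω : ℝ) (hμ : μ = 4 / θ ^ 2) (hω : ω = Cis ^ 2 * (1 + Cct) ^ 2) :
    ‖pbar - pT‖ ^ 2 ≤
      4 * μ * ω * CΩ ^ 8 * ηy ^ 2 + 2 * μ * ω * CΩ ^ 4 * ηw ^ 2 +
        2 * ω * CΩ ^ 2 * (2 + 2 * μ * CΩ ^ 8) * ηu ^ 2 + 2 * ηp ^ 2 := by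
  have hηy0 : 0 ≤ ηy := le_trans (norm_nonneg _) hηy
  have hηw0 : 0 ≤ ηw := le_trans (norm_nonneg _) hηw
  have hηp0 : 0 ≤ ηp := le_trans (norm_nonneg _) hηp
  have hηu0 : 0 ≤ ηu := hηu ▸ norm_nonneg _
  set D : ℝ := ‖ubar - utilde‖ with hDdef
  set E : ℝ := ‖ubar - uT‖ with hEdef
  -- Step A : ‖ybar - yhat‖ ≤ CΩ * E
  have stA : ‖ybar - yhat‖ ≤ CΩ * E := by
    set e := ybar - yhat with he
    have hb1 : B e pbar = 0 := by
      simp [he, map_sub, LinearMap.sub_apply, hydiv, hyhatdiv]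
    have hb2 : B e phat = 0 := by
      simp [he, map_sub, LinearMap.sub_apply, hydiv, hyhatdiv]
    have h1 := hst e
    have h2 := hsthat e
    have hsub : ⟪f + ubar, ι e⟫ - ⟪f + uT, ι e⟫ = ⟪ubar - uT, ι e⟫ := by
      rw [← inner_sub_left]; congr 1; abel
    have hA : A e e = A ybar e - A yhat e := by
      simp only [he, map_sub, LinearMap.sub_apply]; ring
    have hAee : ‖e‖ ^ 2 = ⟪ubar - uT, ι e⟫ := by
      rw [← hAco e]; linarith
    have hle : ‖e‖ ^ 2 ≤ (CΩ * E) * ‖e‖ := by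
      rw [hAee]
      calc ⟪ubar - uT, ι e⟫ ≤ ‖ubar - uT‖ * ‖ι e‖ := real_inner_le_norm _ _
        _ ≤ E * (CΩ * ‖e‖) := by
            exact mul_le_mul_of_nonneg_left (hι e) (norm_nonneg _)
        _ = (CΩ * E) * ‖e‖ := by ring
    exact aux_sq_le (norm_nonneg e) (by positivity) hle
  -- Step B : pressure estimate ‖pbar - phat‖ ≤ Cis * ((1+Cct) * CΩ * E)
  have stB : ‖pbar - phat‖ ≤ Cis * ((1 + Cct) * CΩ * E) := by
    apply hinfsup
    intro ξ
    have h1 := hst ξ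
    have h2 := hsthat ξ
    have hsub : ⟪f + ubar, ι ξ⟫ - ⟪f + uT, ι ξ⟫ = ⟪ubar - uT, ι ξ⟫ := by
      rw [← inner_sub_left]; congr 1; abel
    have hBmap : B ξ (pbar - phat) = B ξ pbar - B ξ phat := map_sub (B ξ) _ _
    have hAe : A (ybar - yhat) ξ = A ybar ξ - A yhat ξ := by
      simp [map_sub, LinearMap.sub_apply]
    have hBp : B ξ (pbar - phat) = A (ybar - yhat) ξ - ⟪ubar - uT, ι ξ⟫ := by
      rw [hAe]; linarith
    have hc1 : A (ybar - yhat) ξ ≤ Cct * ‖ybar - yhat‖ * ‖ξ‖ :=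
      le_trans (le_abs_self _) (hAct _ _)
    have hc2 : -⟪ubar - uT, ι ξ⟫ ≤ E * (CΩ * ‖ξ‖) := by
      have h3 : |⟪ubar - uT, ι ξ⟫| ≤ ‖ubar - uT‖ * ‖ι ξ‖ := abs_real_inner_le_norm _ _
      have h4 : ‖ubar - uT‖ * ‖ι ξ‖ ≤ E * (CΩ * ‖ξ‖) :=
        mul_le_mul_of_nonneg_left (hι ξ) (norm_nonneg _)
      linarith [h3, h4, neg_abs_le ⟪ubar - uT, ι ξ⟫]
    have hc3 : Cct * (‖ybar - yhat‖ * ‖ξ‖) ≤ Cct * (CΩ * E * ‖ξ‖) :=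
      mul_le_mul_of_nonneg_left
        (mul_le_mul_of_nonneg_right stA (norm_nonneg ξ)) hCct.le
    rw [hBp]
    linarith [hc1, hc2, hc3]
  -- Step D : ‖yhat - ytilde‖ ≤ CΩ * ηu
  have stD : ‖yhat - ytilde‖ ≤ CΩ * ηu := by
    set e := yhat - ytilde with he
    have hb1 : B e phat = 0 := by
      simp [he, map_sub, LinearMap.sub_apply, hyhatdiv, hytildediv]
    have hb2 : B e ptilde = 0 := by
      simp [he, map_sub, LinearMap.sub_apply, hyhatdiv, hytildediv]
    have h1 := hsthat e
    have h2 := hsttilde e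
    have hsub : ⟪f + uT, ι e⟫ - ⟪f + utilde, ι e⟫ = ⟪uT - utilde, ι e⟫ := by
      rw [← inner_sub_left]; congr 1; abel
    have hA : A e e = A yhat e - A ytilde e := by
      simp only [he, map_sub, LinearMap.sub_apply]; ring
    have hAee : ‖e‖ ^ 2 = ⟪uT - utilde, ι e⟫ := by
      rw [← hAco e]; linarith
    have hnu : ‖uT - utilde‖ = ηu := by rw [hηu, norm_sub_rev]
    have hle : ‖e‖ ^ 2 ≤ (CΩ * ηu) * ‖e‖ := by
      rw [hAee]
      calc ⟪uT - utilde, ι e⟫ ≤ ‖uT - utilde‖ * ‖ι e‖ := real_inner_le_norm _ _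
        _ ≤ ηu * (CΩ * ‖e‖) := by
            rw [← hnu]
            exact mul_le_mul_of_nonneg_left (hι e) (norm_nonneg _)
        _ = (CΩ * ηu) * ‖e‖ := by ring
    exact aux_sq_le (norm_nonneg e) (by positivity) hle
  -- Step C : ‖what - wtilde‖ ≤ CΩ^2 * ‖yT - ytilde‖
  have stC : ‖what - wtilde‖ ≤ CΩ ^ 2 * ‖yT - ytilde‖ := by
    set e := what - wtilde with he
    have hb1 : B e qhat = 0 := by
      simp [he, map_sub, LinearMap.sub_apply, hwhatdiv, hwtildediv]
    have hb2 : B e qtilde = 0 := by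
      simp [he, map_sub, LinearMap.sub_apply, hwhatdiv, hwtildediv]
    have h1 := hadhat e
    have h2 := hadtilde e
    have hsub : ⟪ι yT - yΩ, ι e⟫ - ⟪ι ytilde - yΩ, ι e⟫ = ⟪ι (yT - ytilde), ι e⟫ := by
      have harg : (ι yT - yΩ) - (ι ytilde - yΩ) = ι (yT - ytilde) := by
        rw [map_sub]; abel
      rw [← inner_sub_left, harg]
    have hC : Cb e e = Cb what e - Cb wtilde e := by
      simp only [he, map_sub, LinearMap.sub_apply]; ring
    have hAee : ‖e‖ ^ 2 = ⟪ι (yT - ytilde), ι e⟫ := by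
      rw [← hAco e, hAC e e]; linarith
    have hle : ‖e‖ ^ 2 ≤ (CΩ ^ 2 * ‖yT - ytilde‖) * ‖e‖ := by
      rw [hAee]
      calc ⟪ι (yT - ytilde), ι e⟫ ≤ ‖ι (yT - ytilde)‖ * ‖ι e‖ := real_inner_le_norm _ _
        _ ≤ (CΩ * ‖yT - ytilde‖) * (CΩ * ‖e‖) :=
            mul_le_mul (hι _) (hι _) (norm_nonneg _) (by positivity)
        _ = (CΩ ^ 2 * ‖yT - ytilde‖) * ‖e‖ := by ring
    exact aux_sq_le (norm_nonneg e) (by positivity) hle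
  -- Step E : ⟪ι (wtilde - wbar), ubar - utilde⟫ ≤ 0
  have stE : ⟪ι (wtilde - wbar), ubar - utilde⟫ ≤ 0 := by
    set m := wtilde - wbar with hm
    set s := ybar - ytilde with hs
    have hbm1 : B m pbar = 0 := by
      simp [hm, map_sub, LinearMap.sub_apply, hwtildediv, hwdiv]
    have hbm2 : B m ptilde = 0 := by
      simp [hm, map_sub, LinearMap.sub_apply, hwtildediv, hwdiv]
    have hbs1 : B s qbar = 0 := by
      simp [hs, map_sub, LinearMap.sub_apply, hydiv, hytildediv]
    have hbs2 : B s qtilde = 0 := by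
      simp [hs, map_sub, LinearMap.sub_apply, hydiv, hytildediv]
    have h1 := hst m
    have h2 := hsttilde m
    have hsub : ⟪f + ubar, ι m⟫ - ⟪f + utilde, ι m⟫ = ⟪ubar - utilde, ι m⟫ := by
      rw [← inner_sub_left]; congr 1; abel
    have h3 := had s
    have h4 := hadtilde s
    have hsub2 : ⟪ι ybar - yΩ, ι s⟫ - ⟪ι ytilde - yΩ, ι s⟫ = ⟪ι s, ι s⟫ := by
      rw [← inner_sub_left]; congr 1; rw [hs, map_sub]; abel
    have hCms : Cb m s = Cb wtilde s - Cb wbar s := by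
      simp [hm, map_sub, LinearMap.sub_apply]
    have hAym : A ybar m - A ytilde m = Cb m s := by
      rw [hAC ybar m, hAC ytilde m, hs]
      simp [map_sub]
    have hkey : ⟪ubar - utilde, ι m⟫ = -⟪ι s, ι s⟫ := by linarith
    rw [real_inner_comm, hkey]
    have h9 : (0:ℝ) ≤ ⟪ι s, ι s⟫ := real_inner_self_nonneg
    linarith
  -- Step F : θ * D^2 ≤ ⟪ι wT, ubar - utilde⟫ - ⟪ι wbar, ubar - utilde⟫
  have stF : θ * D ^ 2 ≤ ⟪ι wT, ubar - utilde⟫ - ⟪ι wbar, ubar - utilde⟫ := by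
    have h1 := hvi utilde hutilde
    have h2 := hvitilde ubar hubar
    have hcomm : ⟪ubar, utilde⟫ = ⟪utilde, ubar⟫ := real_inner_comm _ _
    have h0 : ⟪ubar - utilde, ubar - utilde⟫ = D ^ 2 :=
      real_inner_self_eq_norm_sq _
    simp only [inner_add_left, real_inner_smul_left, inner_sub_left,
      inner_sub_right] at h0 h1 h2 ⊢
    rw [hcomm] at h0 h1
    rw [← h0]
    linarith [h1, h2]
  -- Step G : θ * D ≤ CΩ*ηw + CΩ^3*ηy + CΩ^4*ηu
  have hyTyt : ‖yT - ytilde‖ ≤ ηy + CΩ * ηu := by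
    calc ‖yT - ytilde‖ = ‖(yT - yhat) + (yhat - ytilde)‖ := by abel_nf
      _ ≤ ‖yT - yhat‖ + ‖yhat - ytilde‖ := norm_add_le _ _
      _ ≤ ηy + CΩ * ηu := by
          rw [norm_sub_rev]
          exact add_le_add hηy stD
  have hsplit : ⟪ι wT, ubar - utilde⟫ - ⟪ι wbar, ubar - utilde⟫ =
      ⟪ι (wT - what), ubar - utilde⟫ + ⟪ι (what - wtilde), ubar - utilde⟫ +
        ⟪ι (wtilde - wbar), ubar - utilde⟫ := by
    simp only [map_sub, inner_sub_left]; ring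
  have hT1 : ⟪ι (wT - what), ubar - utilde⟫ ≤ CΩ * ηw * D := by
    calc ⟪ι (wT - what), ubar - utilde⟫ ≤ ‖ι (wT - what)‖ * ‖ubar - utilde‖ :=
        real_inner_le_norm _ _
      _ ≤ (CΩ * ‖wT - what‖) * D :=
        mul_le_mul_of_nonneg_right (hι _) (norm_nonneg _)
      _ ≤ CΩ * ηw * D := by
          have h5 : ‖wT - what‖ ≤ ηw := by rw [norm_sub_rev]; exact hηw
          exact mul_le_mul_of_nonneg_right
            (mul_le_mul_of_nonneg_left h5 hCΩ.le) (norm_nonneg _)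
  have hT2 : ⟪ι (what - wtilde), ubar - utilde⟫ ≤ (CΩ ^ 3 * ηy + CΩ ^ 4 * ηu) * D := by
    have h5 : ‖what - wtilde‖ ≤ CΩ ^ 2 * (ηy + CΩ * ηu) :=
      le_trans stC (mul_le_mul_of_nonneg_left hyTyt (by positivity))
    calc ⟪ι (what - wtilde), ubar - utilde⟫ ≤ ‖ι (what - wtilde)‖ * ‖ubar - utilde‖ :=
        real_inner_le_norm _ _
      _ ≤ (CΩ * ‖what - wtilde‖) * D :=
        mul_le_mul_of_nonneg_right (hι _) (norm_nonneg _)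
      _ ≤ (CΩ * (CΩ ^ 2 * (ηy + CΩ * ηu))) * D :=
        mul_le_mul_of_nonneg_right
          (mul_le_mul_of_nonneg_left h5 hCΩ.le) (norm_nonneg _)
      _ = (CΩ ^ 3 * ηy + CΩ ^ 4 * ηu) * D := by ring
  have stG : θ * D ≤ CΩ * ηw + CΩ ^ 3 * ηy + CΩ ^ 4 * ηu := by
    have hK0 : (0:ℝ) ≤ CΩ * ηw + CΩ ^ 3 * ηy + CΩ ^ 4 * ηu := by positivity
    have hD0 : (0:ℝ) ≤ D := norm_nonneg _
    have h6 : θ * D ^ 2 ≤ (CΩ * ηw + CΩ ^ 3 * ηy + CΩ ^ 4 * ηu) * D := by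
      rw [hsplit] at stF
      linarith [hT1, hT2, stE]
    rcases eq_or_lt_of_le hD0 with h | h
    · rw [← h]; simpa using hK0
    · refine le_of_mul_le_mul_right ?_ h
      calc θ * D * D = θ * D ^ 2 := by ring
        _ ≤ (CΩ * ηw + CΩ ^ 3 * ηy + CΩ ^ 4 * ηu) * D := h6
  -- squared control bound
  have hDsqb : θ ^ 2 * D ^ 2 ≤ 2 * CΩ ^ 2 * ηw ^ 2 + 4 * CΩ ^ 6 * ηy ^ 2 +
      4 * CΩ ^ 8 * ηu ^ 2 := by
    have hD0 : (0:ℝ) ≤ D := norm_nonneg _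
    have h7 : (0:ℝ) ≤ θ * D := mul_nonneg hθ.le hD0
    have h8 := mul_self_le_mul_self h7 stG
    have e1 := sq_nonneg (CΩ * ηw - CΩ ^ 3 * ηy - CΩ ^ 4 * ηu)
    have e2 := sq_nonneg (CΩ ^ 3 * ηy - CΩ ^ 4 * ηu)
    linarith [h8, e1, e2]
  have hθ2 : (0:ℝ) < θ ^ 2 := by positivity
  have hDfin : D ^ 2 ≤ μ / 4 * (2 * CΩ ^ 2 * ηw ^ 2 + 4 * CΩ ^ 6 * ηy ^ 2 +
      4 * CΩ ^ 8 * ηu ^ 2) := by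
    rw [hμ, show 4 / θ ^ 2 / 4 * (2 * CΩ ^ 2 * ηw ^ 2 + 4 * CΩ ^ 6 * ηy ^ 2 +
      4 * CΩ ^ 8 * ηu ^ 2) = (2 * CΩ ^ 2 * ηw ^ 2 + 4 * CΩ ^ 6 * ηy ^ 2 +
      4 * CΩ ^ 8 * ηu ^ 2) / θ ^ 2 by field_simp, le_div_iff₀ hθ2]
    linarith [hDsqb]
  -- E bound
  have hEb : E ≤ D + ηu := by
    calc E = ‖(ubar - utilde) + (utilde - uT)‖ := by rw [hEdef]; abel_nf
      _ ≤ ‖ubar - utilde‖ + ‖utilde - uT‖ := norm_add_le _ _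
      _ = D + ηu := by rw [hηu]
  have hE0 : (0:ℝ) ≤ E := norm_nonneg _
  have hD0 : (0:ℝ) ≤ D := norm_nonneg _
  have hEsq : E ^ 2 ≤ 2 * D ^ 2 + 2 * ηu ^ 2 := by
    have h8 := mul_self_le_mul_self hE0 hEb
    linarith [h8, sq_nonneg (D - ηu)]
  -- pressure pieces
  have hω0 : (0:ℝ) ≤ ω := by rw [hω]; positivity
  have hP1sq : ‖pbar - phat‖ ^ 2 ≤ ω * CΩ ^ 2 * E ^ 2 := by
    have h9 := mul_self_le_mul_self (norm_nonneg (pbar - phat)) stB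
    rw [hω]; linarith [h9]
  have hPtri : ‖pbar - pT‖ ≤ ‖pbar - phat‖ + ηp := by
    calc ‖pbar - pT‖ = ‖(pbar - phat) + (phat - pT)‖ := by abel_nf
      _ ≤ ‖pbar - phat‖ + ‖phat - pT‖ := norm_add_le _ _
      _ ≤ ‖pbar - phat‖ + ηp := by linarith
  have hPsq : ‖pbar - pT‖ ^ 2 ≤ 2 * ‖pbar - phat‖ ^ 2 + 2 * ηp ^ 2 := by
    have h9 := mul_self_le_mul_self (norm_nonneg (pbar - pT)) hPtri
    linarith [h9, sq_nonneg (‖pbar - phat‖ - ηp)]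
  -- final assembly
  have hfin : ω * CΩ ^ 2 * E ^ 2 ≤ ω * CΩ ^ 2 * (2 * D ^ 2 + 2 * ηu ^ 2) :=
    mul_le_mul_of_nonneg_left hEsq (by positivity)
  have hfin2 : ω * CΩ ^ 2 * (2 * D ^ 2) ≤ ω * CΩ ^ 2 * (2 * (μ / 4 *
      (2 * CΩ ^ 2 * ηw ^ 2 + 4 * CΩ ^ 6 * ηy ^ 2 + 4 * CΩ ^ 8 * ηu ^ 2))) := by
    apply mul_le_mul_of_nonneg_left _ (by positivity)
    linarith
  have hμ0 : (0:ℝ) ≤ μ := by rw [hμ]; positivity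
  have hfinal : ‖pbar - pT‖ ^ 2 ≤ 2 * (ω * CΩ ^ 2 * (2 * (μ / 4 *
      (2 * CΩ ^ 2 * ηw ^ 2 + 4 * CΩ ^ 6 * ηy ^ 2 + 4 * CΩ ^ 8 * ηu ^ 2)))) +
      2 * (ω * CΩ ^ 2 * (2 * ηu ^ 2)) + 2 * ηp ^ 2 := by
    have d1 : ω * CΩ ^ 2 * (2 * D ^ 2 + 2 * ηu ^ 2) =
        ω * CΩ ^ 2 * (2 * D ^ 2) + ω * CΩ ^ 2 * (2 * ηu ^ 2) := by ring
    linarith [hPsq, hP1sq, hfin, hfin2, d1.le, d1.ge]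
  calc ‖pbar - pT‖ ^ 2 ≤ _ := hfinal
    _ = 4 * μ * ω * CΩ ^ 8 * ηy ^ 2 + 2 * μ * ω * CΩ ^ 4 * ηw ^ 2 +
        2 * ω * CΩ ^ 2 * (2 + 2 * μ * CΩ ^ 8) * ηu ^ 2 + 2 * ηp ^ 2 := by ring
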